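/- Let (χ, η) ∈ ℝ² with a ≤ χ + η − 1 ≤ χ ≤ b and 0 ≤ η < 1, and suppose χ ∉ S and χ + η − 1 ∉ S. Then g(χ) and g(χ + η − 1) are not both zero. -/

import Mathlib

open MeasureTheory Complex Filter Set

noncomputable section

/-- The support of a measure on `ℝ`. -/
def msupport (μ : Measure ℝ) : Set ℝ := {x | ∀ U ∈ nhds x, μ U ≠ 0}

/-- `S₁ = supp(μ restricted to [χ, b])`. -/
def S1 (μ : Measure ℝ) (b χ : ℝ) : Set ℝ := msupport (μ.restrict (Set.Icc χ b))

/-- `S₂ = supp((λ - μ) restricted to [χ + η - 1, χ])`. -/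
def S2 (μ : Measure ℝ) (χ η : ℝ) : Set ℝ :=
  msupport ((volume - μ).restrict (Set.Icc (χ + η - 1) χ))

/-- `S₃ = supp(μ restricted to [a, χ + η - 1])`. -/
def S3 (μ : Measure ℝ) (a χ η : ℝ) : Set ℝ := msupport (μ.restrict (Set.Icc a (χ + η - 1)))

/-- `g(w) = ∫_{[χ,b]} (w-x)⁻¹ dμ - ∫_{[χ+η-1,χ]} (w-x)⁻¹ d(λ-μ) + ∫_{[a,χ+η-1]} (w-x)⁻¹ dμ`. -/
def gfun (μ : Measure ℝ) (a b χ η : ℝ) (w : ℂ) : ℂ :=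
  (∫ x in Set.Icc χ b, (w - (x : ℂ))⁻¹ ∂μ)
    - (∫ x in Set.Icc (χ + η - 1) χ, (w - (x : ℂ))⁻¹ ∂(volume - μ))
    + ∫ x in Set.Icc a (χ + η - 1), (w - (x : ℂ))⁻¹ ∂μ

/-- From non-membership in the support, get a null open interval around the point. -/
lemma aux_not_mem_msupport {ν : Measure ℝ} {x : ℝ} (h : x ∉ msupport ν) :
    ∃ δ > 0, ν (Ioo (x - δ) (x + δ)) = 0 := by
  simp only [msupport, mem_setOf_eq, not_forall] at h
  obtain ⟨U, hU, hU0⟩ := h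
  rw [not_not] at hU0
  obtain ⟨ε, hε, hball⟩ := Metric.mem_nhds_iff.mp hU
  refine ⟨ε, hε, le_antisymm ?_ (zero_le)⟩
  calc ν (Ioo (x - ε) (x + ε)) ≤ ν U := by
        apply measure_mono; rw [← Real.ball_eq_Ioo]; exact hball
    _ = 0 := hU0

/-- The complement of the support is null. -/
lemma aux_msupport_compl (ν : Measure ℝ) : ν (msupport ν)ᶜ = 0 := by
  apply measure_null_of_locally_null
  intro x hx
  simp only [msupport, mem_compl_iff, mem_setOf_eq, not_forall] at hx
  obtain ⟨U, hU, h0⟩ := hx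
  exact ⟨U, mem_nhdsWithin_of_mem_nhds hU, not_not.mp h0⟩

/-- Integrability of a function continuous on a compact interval minus a null open set. -/
lemma aux_integrable (ν : Measure ℝ) [IsFiniteMeasure ν] {p q : ℝ}
    (hν : ν (Icc p q)ᶜ = 0) {V : Set ℝ} (hV : IsOpen V) (hνV : ν V = 0) {f : ℝ → ℝ}
    (hf : ContinuousOn f (Icc p q \ V)) : Integrable f ν := by
  have hcs : IsCompact (Icc p q \ V) := isCompact_Icc.diff hV
  have hcompl : ν (Icc p q \ V)ᶜ = 0 := by
    have hsub : (Icc p q \ V)ᶜ ⊆ (Icc p q)ᶜ ∪ V := by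
      intro x hx
      simp only [mem_compl_iff, mem_diff, not_and, not_not] at hx
      by_cases hx' : x ∈ Icc p q
      · exact Or.inr (hx hx')
      · exact Or.inl hx'
    refine le_antisymm ?_ (zero_le)
    calc ν (Icc p q \ V)ᶜ ≤ ν ((Icc p q)ᶜ ∪ V) := measure_mono hsub
      _ ≤ ν (Icc p q)ᶜ + ν V := measure_union_le _ _
      _ = 0 := by rw [hν, hνV, add_zero]
  have hres : ν.restrict (Icc p q \ V) = ν := by
    apply Measure.restrict_eq_self_of_ae_mem
    rw [ae_iff]
    have hset : {x : ℝ | ¬ x ∈ Icc p q \ V} = (Icc p q \ V)ᶜ := rfl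
    rw [hset]
    exact hcompl
  have hint := hf.integrableOn_compact (μ := ν) hcs
  rw [IntegrableOn, hres] at hint
  exact hint

/-- Sign identity for the difference of two inverses. -/
lemma aux_diff_eq {χ c x : ℝ} (h1 : χ - x ≠ 0) (h2 : c - x ≠ 0) :
    (χ - x)⁻¹ - (c - x)⁻¹ = (c - χ) / ((χ - x) * (c - x)) := by
  field_simp
  ring

lemma aux_sign_gt {χ c x : ℝ} (hcχ : c < χ) (hx : χ < x) :
    (χ - x)⁻¹ - (c - x)⁻¹ < 0 := by
  rw [aux_diff_eq (by linarith) (by linarith)]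
  exact div_neg_of_neg_of_pos (by linarith) (mul_pos_of_neg_of_neg (by linarith) (by linarith))

lemma aux_sign_lt {χ c x : ℝ} (hcχ : c < χ) (hx : x < c) :
    (χ - x)⁻¹ - (c - x)⁻¹ < 0 := by
  rw [aux_diff_eq (by linarith) (by linarith)]
  exact div_neg_of_neg_of_pos (by linarith) (mul_pos (by linarith) (by linarith))

lemma aux_sign_mid {χ c x : ℝ} (hc : c < x) (hx : x < χ) :
    0 < (χ - x)⁻¹ - (c - x)⁻¹ := by
  rw [aux_diff_eq (by linarith) (by linarith)]
  exact div_pos_of_neg_of_neg (by linarith) (by nlinarith)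

/-- If `0 ≤ η < 1`, `χ ∉ S` and `χ + η - 1 ∉ S`, then `g(χ)` and `g(χ + η - 1)` are not
both zero. -/
theorem gfun_not_both_zero (μ : Measure ℝ) (a b : ℝ) [IsProbabilityMeasure μ]
    (hle : μ ≤ volume) (hsupp : msupport μ ⊆ Set.Icc a b)
    (ha : a ∈ msupport μ) (hb : b ∈ msupport μ) (hab : 1 < b - a)
    (χ η : ℝ) (h1 : a ≤ χ + η - 1) (h2 : χ + η - 1 ≤ χ) (h3 : χ ≤ b)
    (h4 : 0 ≤ η) (h5 : η < 1)
    (hχ : χ ∉ S1 μ b χ ∪ S2 μ χ η ∪ S3 μ a χ η)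
    (hχη : χ + η - 1 ∉ S1 μ b χ ∪ S2 μ χ η ∪ S3 μ a χ η) :
    gfun μ a b χ η (χ : ℂ) ≠ 0 ∨ gfun μ a b χ η ((χ + η - 1 : ℝ) : ℂ) ≠ 0 := by
  classical
  set c : ℝ := χ + η - 1 with hc
  have hcχ : c < χ := by rw [hc]; linarith
  -- non-membership facts
  simp only [mem_union, not_or] at hχ hχη
  obtain ⟨⟨hχ1, hχ2⟩, hχ3⟩ := hχ
  obtain ⟨⟨hc1, hc2⟩, hc3⟩ := hχη
  -- the three measures
  set ν₁ : Measure ℝ := μ.restrict (Icc χ b) with hν₁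
  set ν₂ : Measure ℝ := (volume - μ).restrict (Icc c χ) with hν₂
  set ν₃ : Measure ℝ := μ.restrict (Icc a c) with hν₃
  have hsub_le : (volume - μ : Measure ℝ) ≤ volume := Measure.sub_le
  haveI : IsFiniteMeasure ν₂ := by
    constructor
    rw [hν₂, Measure.restrict_apply_univ]
    calc (volume - μ : Measure ℝ) (Icc c χ) ≤ volume (Icc c χ) := hsub_le _
      _ < ⊤ := by rw [Real.volume_Icc]; exact ENNReal.ofReal_lt_top
  -- null neighborhoods
  obtain ⟨δ₁, hδ₁, hV₁⟩ := aux_not_mem_msupport hχ1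
  obtain ⟨δ₂, hδ₂, hV₂⟩ := aux_not_mem_msupport hχ2
  obtain ⟨δ₃, hδ₃, hV₃⟩ := aux_not_mem_msupport hc2
  obtain ⟨δ₄, hδ₄, hV₄⟩ := aux_not_mem_msupport hc3
  -- complement-null facts for restricted measures
  have hres1 : ν₁ (Icc χ b)ᶜ = 0 := by
    rw [hν₁, Measure.restrict_apply measurableSet_Icc.compl, compl_inter_self, measure_empty]
  have hres2 : ν₂ (Icc c χ)ᶜ = 0 := by
    rw [hν₂, Measure.restrict_apply measurableSet_Icc.compl, compl_inter_self, measure_empty]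
  have hres3 : ν₃ (Icc a c)ᶜ = 0 := by
    rw [hν₃, Measure.restrict_apply measurableSet_Icc.compl, compl_inter_self, measure_empty]
  -- integrability of the six functions
  have hcont : ∀ (w : ℝ) (s : Set ℝ), (∀ x ∈ s, w - x ≠ 0) →
      ContinuousOn (fun x : ℝ => (w - x)⁻¹) s := by
    intro w s hs
    exact ((continuous_const.sub continuous_id).continuousOn).inv₀ hs
  have hint1 : Integrable (fun x => (χ - x)⁻¹) ν₁ := by
    refine aux_integrable ν₁ hres1 isOpen_Ioo hV₁ (hcont _ _ ?_)
    rintro x ⟨⟨hx1, -⟩, hx2⟩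
    simp only [mem_Ioo, not_and, not_lt] at hx2
    have : χ + δ₁ ≤ x := hx2 (by linarith)
    linarith
  have hint1' : Integrable (fun x => (c - x)⁻¹) ν₁ := by
    refine aux_integrable ν₁ hres1 isOpen_empty (measure_empty) ?_
    rw [diff_empty]
    refine hcont _ _ ?_
    rintro x ⟨hx1, -⟩
    linarith
  have hint2 : Integrable (fun x => (χ - x)⁻¹) ν₂ := by
    refine aux_integrable ν₂ hres2 isOpen_Ioo hV₂ (hcont _ _ ?_)
    rintro x ⟨⟨-, hx1⟩, hx2⟩
    simp only [mem_Ioo, not_and, not_lt] at hx2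
    by_cases hlt : χ - δ₂ < x
    · have := hx2 hlt; linarith
    · push_neg at hlt; linarith
  have hint2' : Integrable (fun x => (c - x)⁻¹) ν₂ := by
    refine aux_integrable ν₂ hres2 isOpen_Ioo hV₃ (hcont _ _ ?_)
    rintro x ⟨⟨hx1, -⟩, hx2⟩
    simp only [mem_Ioo, not_and, not_lt] at hx2
    have : c + δ₃ ≤ x := hx2 (by linarith)
    linarith
  have hint3 : Integrable (fun x => (χ - x)⁻¹) ν₃ := by
    refine aux_integrable ν₃ hres3 isOpen_empty (measure_empty) ?_
    rw [diff_empty]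
    refine hcont _ _ ?_
    rintro x ⟨-, hx1⟩
    linarith
  have hint3' : Integrable (fun x => (c - x)⁻¹) ν₃ := by
    refine aux_integrable ν₃ hres3 isOpen_Ioo hV₄ (hcont _ _ ?_)
    rintro x ⟨⟨-, hx1⟩, hx2⟩
    simp only [mem_Ioo, not_and, not_lt] at hx2
    by_cases hlt : c - δ₄ < x
    · have := hx2 hlt; linarith
    · push_neg at hlt; linarith
  -- gfun at a real point is the coercion of a real integral expression
  have key : ∀ w : ℝ, gfun μ a b χ η (w : ℂ) =
      (((∫ x in Icc χ b, (w - x)⁻¹ ∂μ) - (∫ x in Icc c χ, (w - x)⁻¹ ∂(volume - μ))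
        + ∫ x in Icc a c, (w - x)⁻¹ ∂μ : ℝ) : ℂ) := by
    intro w
    have hI : ∀ (ρ : Measure ℝ) (s : Set ℝ), (∫ x in s, ((w : ℂ) - (x : ℂ))⁻¹ ∂ρ)
        = ((∫ x in s, (w - x)⁻¹ ∂ρ : ℝ) : ℂ) := by
      intro ρ s
      calc (∫ x in s, ((w : ℂ) - (x : ℂ))⁻¹ ∂ρ)
          = ∫ x in s, (((w - x)⁻¹ : ℝ) : ℂ) ∂ρ := by
            refine integral_congr_ae (Eventually.of_forall fun x => ?_)
            norm_cast
        _ = ((∫ x in s, (w - x)⁻¹ ∂ρ : ℝ) : ℂ) := integral_ofReal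
    unfold gfun
    rw [← hc, hI, hI, hI]
    push_cast
    ring
  -- suppose both are zero
  by_contra hcon
  push_neg at hcon
  obtain ⟨hz1, hz2⟩ := hcon
  rw [key χ, Complex.ofReal_eq_zero] at hz1
  rw [key c, Complex.ofReal_eq_zero] at hz2
  -- the difference of the two real values
  have hD : (∫ x in Icc χ b, ((χ - x)⁻¹ - (c - x)⁻¹) ∂μ)
      - (∫ x in Icc c χ, ((χ - x)⁻¹ - (c - x)⁻¹) ∂(volume - μ))
      + (∫ x in Icc a c, ((χ - x)⁻¹ - (c - x)⁻¹) ∂μ) = 0 := by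
    rw [integral_sub hint1 hint1', integral_sub hint2 hint2', integral_sub hint3 hint3']
    linarith
  -- singletons are null
  have hμ_singleton : ∀ x : ℝ, μ {x} = 0 := by
    intro x
    refine le_antisymm ?_ (zero_le)
    calc μ {x} ≤ volume {x} := hle _
      _ = 0 := Real.volume_singleton
  have hsub_singleton : ∀ x : ℝ, (volume - μ : Measure ℝ) {x} = 0 := by
    intro x
    refine le_antisymm ?_ (zero_le)
    calc (volume - μ : Measure ℝ) {x} ≤ volume {x} := hsub_le _
      _ = 0 := Real.volume_singleton
  have hne_ae : ∀ (ρ : Measure ℝ) (t : Set ℝ) (y : ℝ), ρ {y} = 0 →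
      ∀ᵐ x ∂(ρ.restrict t), x ≠ y := by
    intro ρ t y hy
    rw [ae_iff]
    refine le_antisymm ?_ (zero_le)
    calc ρ.restrict t {x | ¬ x ≠ y} ≤ ρ.restrict t {y} := by
          apply measure_mono
          intro x hx
          rw [mem_setOf_eq, not_not] at hx
          exact mem_singleton_iff.mpr hx
      _ = ρ ({y} ∩ t) := Measure.restrict_apply (measurableSet_singleton y)
      _ ≤ ρ {y} := measure_mono inter_subset_left
      _ = 0 := hy
  -- sign facts
  have hA : (∫ x in Icc χ b, ((χ - x)⁻¹ - (c - x)⁻¹) ∂μ) ≤ 0 := by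
    apply integral_nonpos_of_ae
    have h1 := ae_restrict_mem (μ := μ) (measurableSet_Icc (a := χ) (b := b))
    have h2 := hne_ae μ (Icc χ b) χ (hμ_singleton χ)
    filter_upwards [h1, h2] with x hx hxne
    have hxgt : χ < x := lt_of_le_of_ne hx.1 (Ne.symm hxne)
    exact (aux_sign_gt hcχ hxgt).le
  have hB : 0 ≤ (∫ x in Icc c χ, ((χ - x)⁻¹ - (c - x)⁻¹) ∂(volume - μ)) := by
    apply integral_nonneg_of_ae
    have h1 := ae_restrict_mem (μ := (volume - μ : Measure ℝ)) (measurableSet_Icc (a := c) (b := χ))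
    have h2 := hne_ae (volume - μ) (Icc c χ) χ (hsub_singleton χ)
    have h3 := hne_ae (volume - μ) (Icc c χ) c (hsub_singleton c)
    filter_upwards [h1, h2, h3] with x hx hxχ hxc
    have hx1 : c < x := lt_of_le_of_ne hx.1 (Ne.symm hxc)
    have hx2 : x < χ := lt_of_le_of_ne hx.2 hxχ
    exact (aux_sign_mid hx1 hx2).le
  have hC : (∫ x in Icc a c, ((χ - x)⁻¹ - (c - x)⁻¹) ∂μ) ≤ 0 := by
    apply integral_nonpos_of_ae
    have h1 := ae_restrict_mem (μ := μ) (measurableSet_Icc (a := a) (b := c))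
    have h2 := hne_ae μ (Icc a c) c (hμ_singleton c)
    filter_upwards [h1, h2] with x hx hxne
    have hxlt : x < c := lt_of_le_of_ne hx.2 hxne
    exact (aux_sign_lt hcχ hxlt).le
  -- complement of [a,b] is μ-null
  have hcompl_ab : μ (Icc a b)ᶜ = 0 := by
    refine le_antisymm ?_ (zero_le)
    calc μ (Icc a b)ᶜ ≤ μ (msupport μ)ᶜ := measure_mono (compl_subset_compl.mpr hsupp)
      _ = 0 := aux_msupport_compl μ
  -- one of the extreme cases occurs
  have hcase : a < c ∨ χ < b := by
    by_contra hcon2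
    push_neg at hcon2
    obtain ⟨hca, hbχ⟩ := hcon2
    rw [hc] at hca
    linarith
  -- strictness
  rcases hcase with hac | hχb
  · -- a < c, show the third integral is < 0
    have hCne : (∫ x in Icc a c, ((χ - x)⁻¹ - (c - x)⁻¹) ∂μ) ≠ 0 := by
      intro heq
      have hint : Integrable (fun x => -((χ - x)⁻¹ - (c - x)⁻¹)) ν₃ := (hint3.sub hint3').neg
      have hnn : 0 ≤ᵐ[ν₃] fun x => -((χ - x)⁻¹ - (c - x)⁻¹) := by
        have h1 := ae_restrict_mem (μ := μ) (measurableSet_Icc (a := a) (b := c))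
        have h2 := hne_ae μ (Icc a c) c (hμ_singleton c)
        filter_upwards [h1, h2] with x hx hxne
        have hxlt : x < c := lt_of_le_of_ne hx.2 hxne
        simp only [Pi.zero_apply, neg_nonneg]
        exact (aux_sign_lt hcχ hxlt).le
      have hzero : (∫ x, -((χ - x)⁻¹ - (c - x)⁻¹) ∂ν₃) = 0 := by
        rw [integral_neg]
        rw [hν₃]
        rw [heq]
        simp
      have hae := (integral_eq_zero_iff_of_nonneg_ae hnn hint).mp hzero
      have hnull : ν₃ {x | ¬ -((χ - x)⁻¹ - (c - x)⁻¹) = 0} = 0 := by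
        rw [← ae_iff]; exact hae
      have hico : ν₃ (Ico a c) = 0 := by
        refine le_antisymm ?_ (zero_le)
        calc ν₃ (Ico a c) ≤ ν₃ {x | ¬ -((χ - x)⁻¹ - (c - x)⁻¹) = 0} := by
              apply measure_mono
              rintro x ⟨-, hx2⟩
              simp only [mem_setOf_eq, neg_eq_zero]
              exact (aux_sign_lt hcχ hx2).ne
          _ = 0 := hnull
      have hico' : μ (Ico a c) = 0 := by
        rw [hν₃, Measure.restrict_apply' measurableSet_Icc, inter_eq_self_of_subset_left
          Ico_subset_Icc_self] at hico
        exact hico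
      have hnbhd : μ (Ioo (a - 1) c) ≠ 0 := ha (Ioo (a - 1) c)
        (Ioo_mem_nhds (by linarith) hac)
      apply hnbhd
      refine le_antisymm ?_ (zero_le)
      calc μ (Ioo (a - 1) c) ≤ μ (Ico a c ∪ (Icc a b)ᶜ) := by
            apply measure_mono
            rintro x ⟨hx1, hx2⟩
            by_cases hax : a ≤ x
            · exact Or.inl ⟨hax, hx2⟩
            · push_neg at hax
              exact Or.inr (fun hmem => absurd hmem.1 (not_le.mpr hax))
        _ ≤ μ (Ico a c) + μ (Icc a b)ᶜ := measure_union_le _ _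
        _ = 0 := by rw [hico', hcompl_ab, add_zero]
    have : (∫ x in Icc a c, ((χ - x)⁻¹ - (c - x)⁻¹) ∂μ) < 0 := lt_of_le_of_ne hC hCne
    linarith
  · -- χ < b, show the first integral is < 0
    have hAne : (∫ x in Icc χ b, ((χ - x)⁻¹ - (c - x)⁻¹) ∂μ) ≠ 0 := by
      intro heq
      have hint : Integrable (fun x => -((χ - x)⁻¹ - (c - x)⁻¹)) ν₁ := (hint1.sub hint1').neg
      have hnn : 0 ≤ᵐ[ν₁] fun x => -((χ - x)⁻¹ - (c - x)⁻¹) := by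
        have h1 := ae_restrict_mem (μ := μ) (measurableSet_Icc (a := χ) (b := b))
        have h2 := hne_ae μ (Icc χ b) χ (hμ_singleton χ)
        filter_upwards [h1, h2] with x hx hxne
        have hxgt : χ < x := lt_of_le_of_ne hx.1 (Ne.symm hxne)
        simp only [Pi.zero_apply, neg_nonneg]
        exact (aux_sign_gt hcχ hxgt).le
      have hzero : (∫ x, -((χ - x)⁻¹ - (c - x)⁻¹) ∂ν₁) = 0 := by
        rw [integral_neg]
        rw [hν₁]
        rw [heq]
        simp
      have hae := (integral_eq_zero_iff_of_nonneg_ae hnn hint).mp hzero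
      have hnull : ν₁ {x | ¬ -((χ - x)⁻¹ - (c - x)⁻¹) = 0} = 0 := by
        rw [← ae_iff]; exact hae
      have hioc : ν₁ (Ioc χ b) = 0 := by
        refine le_antisymm ?_ (zero_le)
        calc ν₁ (Ioc χ b) ≤ ν₁ {x | ¬ -((χ - x)⁻¹ - (c - x)⁻¹) = 0} := by
              apply measure_mono
              rintro x ⟨hx1, -⟩
              simp only [mem_setOf_eq, neg_eq_zero]
              exact (aux_sign_gt hcχ hx1).ne
          _ = 0 := hnull
      have hioc' : μ (Ioc χ b) = 0 := by
        rw [hν₁, Measure.restrict_apply' measurableSet_Icc, inter_eq_self_of_subset_left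
          Ioc_subset_Icc_self] at hioc
        exact hioc
      have hnbhd : μ (Ioo χ (b + 1)) ≠ 0 := hb (Ioo χ (b + 1))
        (Ioo_mem_nhds hχb (by linarith))
      apply hnbhd
      refine le_antisymm ?_ (zero_le)
      calc μ (Ioo χ (b + 1)) ≤ μ (Ioc χ b ∪ (Icc a b)ᶜ) := by
            apply measure_mono
            rintro x ⟨hx1, hx2⟩
            by_cases hxb : x ≤ b
            · exact Or.inl ⟨hx1, hxb⟩
            · push_neg at hxb
              exact Or.inr (fun hmem => absurd hmem.2 (not_le.mpr hxb))
        _ ≤ μ (Ioc χ b) + μ (Icc a b)ᶜ := measure_union_le _ _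
        _ = 0 := by rw [hioc', hcompl_ab, add_zero]
    have : (∫ x in Icc χ b, ((χ - x)⁻¹ - (c - x)⁻¹) ∂μ) < 0 := lt_of_le_of_ne hA hAne
    linarith
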